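/- Let n, N, l be natural numbers. For each i ∈ {1,…,l} let r_i > 0, c_i ∈ ℝ^n, τ_i ∈ ℝ, and let y : {0,…,N} × {1,…,l} → {0,1} be given binary values. Let A ∈ ℝ^{n×n}, b : {0,…,N−1} → ℝ^n, x̄ ∈ ℝ^n, and let Ψ, G ∈ ℝ^{n×n} be positive semidefinite. Then the function J on (ℝ^n)^{N+1} defined on a trajectory X = (x_0,…,x_N) by J(X) = ‖x_0 − x̄‖²_Ψ + Σ_{j=0}^{N−1} ‖x_{j+1} − A x_j − b_j‖²_G − Σ_{j=0}^{N} Σ_{i=1}^{l} [ (1 − y(j,i)) · log( ∫_{(−∞, τ_i − ⟨c_i, x_j⟩)} exp(−u²/(2 r_i)) du ) + y(j,i) · log( ∫_{(τ_i − ⟨c_i, x_j⟩, ∞)} exp(−u²/(2 r_i)) du ) ] is convex on all of (ℝ^n)^{N+1}. -/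

import Mathlib

open MeasureTheory

open Set Filter

section
variable {r : ℝ}


lemma phi_int {r : ℝ} (hr : 0 < r) :
    Integrable (fun u : ℝ => Real.exp (-u ^ 2 / (2 * r))) := by
  have h := integrable_exp_neg_mul_sq (b := 1 / (2 * r)) (by positivity)
  convert h using 2 with u; ring_nf

lemma phi_mul_int {r : ℝ} (hr : 0 < r) :
    Integrable (fun u : ℝ => u * Real.exp (-u ^ 2 / (2 * r))) := by
  have h := integrable_mul_exp_neg_mul_sq (b := 1 / (2 * r)) (by positivity)
  convert h using 2 with u; ring_nf

lemma int_mul_phi {r : ℝ} (hr : 0 < r) (t : ℝ) :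
    ∫ u in Iio t, u * Real.exp (-u ^ 2 / (2 * r))
      = -r * Real.exp (-t ^ 2 / (2 * r)) := by
  rw [← integral_Iic_eq_integral_Iio]
  have hderiv : ∀ u : ℝ, u ∈ Iic t →
      HasDerivAt (fun v : ℝ => -r * Real.exp (-v ^ 2 / (2 * r)))
        (u * Real.exp (-u ^ 2 / (2 * r))) u := by
    intro u _
    have h1 : HasDerivAt (fun v : ℝ => -v ^ 2 / (2 * r)) (-(2 * u) / (2 * r)) u := by
      have := ((hasDerivAt_pow 2 u).neg).div_const (2 * r)
      simpa using this
    have h2 := (h1.exp).const_mul (-r)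
    refine h2.congr_deriv ?_
    field_simp
  have htend : Tendsto (fun v : ℝ => -r * Real.exp (-v ^ 2 / (2 * r))) atBot (nhds 0) := by
    have h1 : Tendsto (fun v : ℝ => -v ^ 2 / (2 * r)) atBot atBot := by
      have hle : (fun v : ℝ => -v ^ 2 / (2 * r)) ≤ᶠ[atBot] fun v => v / (2 * r) := by
        filter_upwards [eventually_le_atBot (-1 : ℝ)] with v hv
        have h2 : -v ^ 2 ≤ v := by nlinarith
        exact div_le_div_of_nonneg_right h2 (by positivity) |>.trans_eq rfl
      exact tendsto_atBot_mono' _ hle (tendsto_id.atBot_div_const (by positivity))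
    have := (Real.tendsto_exp_atBot.comp h1).const_mul (-r)
    simpa using this
  have := integral_Iic_of_hasDerivAt_of_tendsto' hderiv ((phi_mul_int hr).integrableOn) htend
  rw [this]; ring

lemma F_pos {r : ℝ} (hr : 0 < r) (t : ℝ) :
    0 < ∫ u in Iio t, Real.exp (-u ^ 2 / (2 * r)) := by
  rw [setIntegral_pos_iff_support_of_nonneg_ae]
  · have : (Function.support fun u : ℝ => Real.exp (-u ^ 2 / (2 * r))) = univ := by
      ext u; simp [Function.mem_support, (Real.exp_pos _).ne']
    rw [this, univ_inter]
    simp [Real.volume_Iio]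
  · exact Eventually.of_forall fun u => (Real.exp_pos _).le
  · exact (phi_int hr).integrableOn

lemma mills {r : ℝ} (hr : 0 < r) (t : ℝ) :
    (-(t / r)) * ∫ u in Iio t, Real.exp (-u ^ 2 / (2 * r))
      ≤ Real.exp (-t ^ 2 / (2 * r)) := by
  rcases le_or_gt 0 t with ht | ht
  · have h1 : (-(t / r)) ≤ 0 := by
      have : 0 ≤ t / r := div_nonneg ht hr.le
      linarith
    have h2 := (F_pos hr t).le
    nlinarith [Real.exp_pos (-t ^ 2 / (2 * r))]
  · -- t < 0
    have hmono : (∫ u in Iio t, Real.exp (-u ^ 2 / (2 * r)))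
        ≤ ∫ u in Iio t, (u / t) * Real.exp (-u ^ 2 / (2 * r)) := by
      refine setIntegral_mono_on ((phi_int hr).integrableOn) ?_ measurableSet_Iio ?_
      · have := ((phi_mul_int hr).const_mul (1 / t)).integrableOn (s := Iio t)
        refine this.congr_fun ?_ measurableSet_Iio
        intro u _
        have ht' : t ≠ 0 := ht.ne
        field_simp
      · intro u hu
        have hu' : u < t := hu
        have h1 : (1 : ℝ) ≤ u / t := by
          rw [le_div_iff_of_neg ht]
          linarith
        nlinarith [Real.exp_pos (-u ^ 2 / (2 * r))]
    have heval : (∫ u in Iio t, (u / t) * Real.exp (-u ^ 2 / (2 * r)))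
        = (1 / t) * (-r * Real.exp (-t ^ 2 / (2 * r))) := by
      rw [← int_mul_phi hr t, ← MeasureTheory.integral_const_mul]
      congr 1; funext u
      have ht' : t ≠ 0 := ht.ne
      field_simp
    rw [heval] at hmono
    have hfac : 0 < -(t / r) := by
      have := div_neg_of_neg_of_pos ht hr
      linarith
    calc (-(t / r)) * ∫ u in Iio t, Real.exp (-u ^ 2 / (2 * r))
        ≤ (-(t / r)) * ((1 / t) * (-r * Real.exp (-t ^ 2 / (2 * r)))) :=
          mul_le_mul_of_nonneg_left hmono hfac.le
      _ = Real.exp (-t ^ 2 / (2 * r)) := by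
          have ht' : t ≠ 0 := ht.ne
          field_simp

lemma phi_cont : Continuous (fun u : ℝ => Real.exp (-u ^ 2 / (2 * r))) := by fun_prop

lemma phi_hasDeriv (hr : 0 < r) (t : ℝ) :
    HasDerivAt (fun s : ℝ => Real.exp (-s ^ 2 / (2 * r)))
      ((-(t / r)) * Real.exp (-t ^ 2 / (2 * r))) t := by
  have h1 : HasDerivAt (fun s : ℝ => -s ^ 2 / (2 * r)) (-(2 * t) / (2 * r)) t := by
    have := ((hasDerivAt_pow 2 t).neg).div_const (2 * r)
    simpa using this
  have h2 := h1.exp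
  convert h2 using 1
  field_simp

lemma F_hasDeriv (hr : 0 < r) (t : ℝ) :
    HasDerivAt (fun s => ∫ u in Iio s, Real.exp (-u ^ 2 / (2 * r)))
      (Real.exp (-t ^ 2 / (2 * r))) t := by
  have heq : (fun s => ∫ u in Iio s, Real.exp (-u ^ 2 / (2 * r)))
      = fun s => (∫ u in Iic (0:ℝ), Real.exp (-u ^ 2 / (2 * r)))
          + ∫ u in (0:ℝ)..s, Real.exp (-u ^ 2 / (2 * r)) := by
    funext s
    rw [← integral_Iic_eq_integral_Iio,
      ← intervalIntegral.integral_Iic_sub_Iic ((phi_int hr).integrableOn)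
        ((phi_int hr).integrableOn)]
    ring
  rw [heq]
  have := intervalIntegral.integral_hasDerivAt_right
    ((phi_int hr).intervalIntegrable (a := 0) (b := t))
    (phi_cont.stronglyMeasurableAtFilter _ _) phi_cont.continuousAt
  simpa using (this.const_add (∫ u in Iic (0:ℝ), Real.exp (-u ^ 2 / (2 * r))))

lemma concave_logF (hr : 0 < r) :
    ConcaveOn ℝ univ (fun t => Real.log (∫ u in Iio t, Real.exp (-u ^ 2 / (2 * r)))) := by
  have hlog : ∀ t : ℝ, HasDerivAt (fun s => Real.log (∫ u in Iio s, Real.exp (-u ^ 2 / (2 * r))))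
      (Real.exp (-t ^ 2 / (2 * r)) / ∫ u in Iio t, Real.exp (-u ^ 2 / (2 * r))) t :=
    fun t => (F_hasDeriv hr t).log (F_pos hr t).ne'
  have hratio : ∀ t : ℝ, HasDerivAt
      (fun s => Real.exp (-s ^ 2 / (2 * r)) / ∫ u in Iio s, Real.exp (-u ^ 2 / (2 * r)))
      ((((-(t / r)) * Real.exp (-t ^ 2 / (2 * r))) * (∫ u in Iio t, Real.exp (-u ^ 2 / (2 * r)))
          - Real.exp (-t ^ 2 / (2 * r)) * Real.exp (-t ^ 2 / (2 * r)))
        / (∫ u in Iio t, Real.exp (-u ^ 2 / (2 * r))) ^ 2) t :=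
    fun t => (phi_hasDeriv hr t).div (F_hasDeriv hr t) (F_pos hr t).ne'
  refine concaveOn_of_hasDerivWithinAt2_nonpos convex_univ ?_
    (fun x _ => (hlog x).hasDerivWithinAt) (fun x _ => (hratio x).hasDerivWithinAt) ?_
  · exact (continuous_iff_continuousAt.mpr fun t => (hlog t).continuousAt).continuousOn
  · intro x _
    have h1 := mills hr x
    have h2 := (F_pos hr x).le
    have h3 := (Real.exp_pos (-x ^ 2 / (2 * r))).le
    apply div_nonpos_of_nonpos_of_nonneg
    · nlinarith
    · positivity

lemma tail_eq (hr : 0 < r) (t : ℝ) :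
    (∫ u in Ioi t, Real.exp (-u ^ 2 / (2 * r)))
      = ∫ u in Iio (-t), Real.exp (-u ^ 2 / (2 * r)) := by
  rw [← integral_Iic_eq_integral_Iio, ← integral_comp_neg_Ioi]
  congr 1 with u
  ring_nf

end

lemma convexOn_comp_affine {E F : Type*} [AddCommGroup E] [Module ℝ E]
    [AddCommGroup F] [Module ℝ F] {f : F → ℝ} (hf : ConvexOn ℝ Set.univ f) (L : E → F)
    (hL : ∀ (a b : ℝ) (x y : E), a + b = 1 → L (a • x + b • y) = a • L x + b • L y) :
    ConvexOn ℝ Set.univ (fun x => f (L x)) :=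
  ⟨convex_univ, fun x _ y _ a b ha hb hab => by
    simp only [hL a b x y hab]
    exact hf.2 (mem_univ _) (mem_univ _) ha hb hab⟩

lemma concaveOn_comp_affine {E F : Type*} [AddCommGroup E] [Module ℝ E]
    [AddCommGroup F] [Module ℝ F] {f : F → ℝ} (hf : ConcaveOn ℝ Set.univ f) (L : E → F)
    (hL : ∀ (a b : ℝ) (x y : E), a + b = 1 → L (a • x + b • y) = a • L x + b • L y) :
    ConcaveOn ℝ Set.univ (fun x => f (L x)) :=
  ⟨convex_univ, fun x _ y _ a b ha hb hab => by
    simp only [hL a b x y hab]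
    exact hf.2 (mem_univ _) (mem_univ _) ha hb hab⟩

lemma concaveOn_finset_sum {ι E : Type*} [AddCommGroup E] [Module ℝ E]
    (s : Finset ι) (f : ι → E → ℝ) (h : ∀ i ∈ s, ConcaveOn ℝ Set.univ (f i)) :
    ConcaveOn ℝ Set.univ (fun x => ∑ i ∈ s, f i x) := by
  classical
  induction s using Finset.cons_induction with
  | empty => simpa using concaveOn_const (0 : ℝ) convex_univ
  | cons a s ha ih =>
    simp only [Finset.sum_cons]
    exact (h a (Finset.mem_cons_self a s)).add (ih fun i hi => h i (Finset.mem_cons_of_mem hi))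

lemma convexOn_finset_sum {ι E : Type*} [AddCommGroup E] [Module ℝ E]
    (s : Finset ι) (f : ι → E → ℝ) (h : ∀ i ∈ s, ConvexOn ℝ Set.univ (f i)) :
    ConvexOn ℝ Set.univ (fun x => ∑ i ∈ s, f i x) := by
  classical
  induction s using Finset.cons_induction with
  | empty => simpa using convexOn_const (0 : ℝ) convex_univ
  | cons a s ha ih =>
    simp only [Finset.sum_cons]
    exact (h a (Finset.mem_cons_self a s)).add (ih fun i hi => h i (Finset.mem_cons_of_mem hi))

lemma convexOn_quadForm {n : ℕ} (M : Matrix (Fin n) (Fin n) ℝ) (hM : M.PosSemidef) :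
    ConvexOn ℝ Set.univ (fun v : Fin n → ℝ => dotProduct v (M.mulVec v)) := by
  refine ⟨convex_univ, fun x _ y _ a b ha hb hab => ?_⟩
  have hb' : b = 1 - a := by linarith
  subst hb'
  have key := hM.dotProduct_mulVec_nonneg (x - y)
  simp only [star_trivial, sub_dotProduct, dotProduct_sub, Matrix.mulVec_sub] at key
  simp only [smul_eq_mul, add_dotProduct, dotProduct_add, Matrix.mulVec_add,
    smul_dotProduct, dotProduct_smul, Matrix.mulVec_smul, smul_eq_mul]
  nlinarith [mul_nonneg (mul_nonneg ha hb) key]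

lemma concave_logT {r : ℝ} (hr : 0 < r) :
    ConcaveOn ℝ univ (fun t => Real.log (∫ u in Ioi t, Real.exp (-u ^ 2 / (2 * r)))) := by
  have h := concaveOn_comp_affine (concave_logF hr) (fun t : ℝ => -t)
    (by intro a b x y hab; simp only [smul_eq_mul]; ring)
  have heq : (fun t : ℝ => Real.log (∫ u in Ioi t, Real.exp (-u ^ 2 / (2 * r))))
      = fun t => Real.log (∫ u in Iio (-t), Real.exp (-u ^ 2 / (2 * r))) :=
    funext fun t => by rw [tail_eq hr]
  rw [heq]; exact h

/-- Proposition 1, Gaussian case: the moving-horizon MAP cost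
with quadratic arrival cost, Gaussian process-disturbance terms, and threshold
measurements with Gaussian noises `N(0, r_i)` is convex on the whole
trajectory space. -/
theorem stmt_14 (n N l : ℕ)
    (r : Fin l → ℝ) (hr : ∀ i, 0 < r i)
    (c : Fin l → Fin n → ℝ) (τ : Fin l → ℝ)
    (y : Fin (N + 1) → Fin l → ℝ)
    (hy : ∀ j i, y j i = 0 ∨ y j i = 1)
    (A : Matrix (Fin n) (Fin n) ℝ) (b : Fin N → Fin n → ℝ)
    (xbar : Fin n → ℝ) (Ψ G : Matrix (Fin n) (Fin n) ℝ)
    (hΨ : Ψ.PosSemidef) (hG : G.PosSemidef) :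
    ConvexOn ℝ Set.univ (fun X : Fin (N + 1) → Fin n → ℝ =>
      dotProduct (X 0 - xbar) (Ψ.mulVec (X 0 - xbar)) +
      (∑ j : Fin N, dotProduct
        (X j.succ - A.mulVec (X j.castSucc) - b j)
        (G.mulVec (X j.succ - A.mulVec (X j.castSucc) - b j))) -
      ∑ j : Fin (N + 1), ∑ i : Fin l,
        ((1 - y j i) *
            Real.log (∫ u in Set.Iio (τ i - ∑ k, c i k * X j k),
              Real.exp (-u ^ 2 / (2 * r i))) +
          y j i *
            Real.log (∫ u in Set.Ioi (τ i - ∑ k, c i k * X j k),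
              Real.exp (-u ^ 2 / (2 * r i))))) := by
  have h0 : ConvexOn ℝ Set.univ (fun X : Fin (N + 1) → Fin n → ℝ =>
      dotProduct (X 0 - xbar) (Ψ.mulVec (X 0 - xbar))) := by
    refine convexOn_comp_affine (convexOn_quadForm Ψ hΨ) (fun X : Fin (N + 1) → Fin n → ℝ => X 0 - xbar) ?_
    intro a b x y hab
    have hb' : b = 1 - a := by linarith
    subst hb'
    funext k
    simp only [Pi.add_apply, Pi.smul_apply, Pi.sub_apply, smul_eq_mul]
    ring
  have hQ : ConvexOn ℝ Set.univ (fun X : Fin (N + 1) → Fin n → ℝ =>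
      ∑ j : Fin N, dotProduct
        (X j.succ - A.mulVec (X j.castSucc) - b j)
        (G.mulVec (X j.succ - A.mulVec (X j.castSucc) - b j))) := by
    refine convexOn_finset_sum Finset.univ _ fun j _ => ?_
    refine convexOn_comp_affine (convexOn_quadForm G hG)
      (fun X : Fin (N + 1) → Fin n → ℝ => X j.succ - A.mulVec (X j.castSucc) - b j) ?_
    intro a a' x z hab
    have hb' : a' = 1 - a := by linarith
    subst hb'
    simp only [Pi.add_apply, Pi.smul_apply, Matrix.mulVec_add, Matrix.mulVec_smul]
    module
  have hS : ConcaveOn ℝ Set.univ (fun X : Fin (N + 1) → Fin n → ℝ =>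
      ∑ j : Fin (N + 1), ∑ i : Fin l,
        ((1 - y j i) *
            Real.log (∫ u in Set.Iio (τ i - ∑ k, c i k * X j k),
              Real.exp (-u ^ 2 / (2 * r i))) +
          y j i *
            Real.log (∫ u in Set.Ioi (τ i - ∑ k, c i k * X j k),
              Real.exp (-u ^ 2 / (2 * r i))))) := by
    refine concaveOn_finset_sum Finset.univ _ fun j _ => ?_
    refine concaveOn_finset_sum Finset.univ _ fun i _ => ?_
    have haff : ∀ (a b : ℝ) (x z : Fin (N + 1) → Fin n → ℝ), a + b = 1 →
        (τ i - ∑ k, c i k * (a • x + b • z) j k)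
          = a • (τ i - ∑ k, c i k * x j k) + b • (τ i - ∑ k, c i k * z j k) := by
      intro a b x z hab
      have hb' : b = 1 - a := by linarith
      subst hb'
      simp only [Pi.add_apply, Pi.smul_apply, smul_eq_mul]
      have hsum : ∑ k, c i k * (a * x j k + (1 - a) * z j k)
          = a * (∑ k, c i k * x j k) + (1 - a) * (∑ k, c i k * z j k) := by
        rw [Finset.mul_sum, Finset.mul_sum, ← Finset.sum_add_distrib]
        exact Finset.sum_congr rfl fun k _ => by ring
      rw [hsum]; ring
    have hy1 : 0 ≤ 1 - y j i := by rcases hy j i with h | h <;> rw [h] <;> norm_num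
    have hy2 : 0 ≤ y j i := by rcases hy j i with h | h <;> rw [h] <;> norm_num
    have t1 := (concaveOn_comp_affine (concave_logF (hr i))
      (fun X : Fin (N + 1) → Fin n → ℝ => τ i - ∑ k, c i k * X j k) haff).smul hy1
    have t2 := (concaveOn_comp_affine (concave_logT (hr i))
      (fun X : Fin (N + 1) → Fin n → ℝ => τ i - ∑ k, c i k * X j k) haff).smul hy2
    exact t1.add t2
  exact (h0.add hQ).sub hS
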